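/- For m a positive half-integer and s a half-integer, Φ^{[m,s]}(2τ, z₁, z₂, t) = (1/2){ Φ^{[2m,2s]}(τ, z₁/2, z₂/2, t/2) + e^{−2πis} Φ^{[2m,2s]}(τ, (z₁+1)/2, (z₂−1)/2, t/2) }. -/

import Mathlib

open Real Complex Filter Topology

noncomputable section

noncomputable def Phi1 (m s : ℝ) (τ z1 z2 t : ℂ) : ℂ :=
  Complex.exp (-2*(π:ℂ)*Complex.I*(m:ℂ)*t) *
    ∑' j : ℤ,
      Complex.exp (2*(π:ℂ)*Complex.I*((m:ℂ)*(j:ℂ)*(z1+z2) + (s:ℂ)*z1)) *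
        Complex.exp (2*(π:ℂ)*Complex.I*τ*((m:ℂ)*(j:ℂ)^2 + (s:ℂ)*(j:ℂ))) /
        (1 - Complex.exp (2*(π:ℂ)*Complex.I*z1) * Complex.exp (2*(π:ℂ)*Complex.I*τ) ^ j)

noncomputable def Phi2 (m s : ℝ) (τ z1 z2 t : ℂ) : ℂ :=
  Complex.exp (-2*(π:ℂ)*Complex.I*(m:ℂ)*t) *
    ∑' j : ℤ,
      Complex.exp (-(2*(π:ℂ)*Complex.I)*((m:ℂ)*(j:ℂ)*(z1+z2) + (s:ℂ)*z2)) *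
        Complex.exp (2*(π:ℂ)*Complex.I*τ*((m:ℂ)*(j:ℂ)^2 + (s:ℂ)*(j:ℂ))) /
        (1 - Complex.exp (-(2*(π:ℂ)*Complex.I)*z2) * Complex.exp (2*(π:ℂ)*Complex.I*τ) ^ j)

noncomputable def Phi (m s : ℝ) (τ z1 z2 t : ℂ) : ℂ :=
  Phi1 m s τ z1 z2 t - Phi2 m s τ z1 z2 t

lemma inv_den_bound {τ : ℂ} (hτ : 0 < τ.im) (u : ℂ) :
    ∃ C : ℝ, ∀ j : ℤ, ‖(1 - u * Complex.exp (2*(π:ℂ)*Complex.I*τ) ^ j)‖⁻¹ ≤ C := by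
  set w : ℂ := 2*(π:ℂ)*Complex.I*τ with hw
  have hwre : w.re = -(2*π*τ.im) := by simp [hw, Complex.mul_re, Complex.mul_im]
  have hwre0 : w.re < 0 := by rw [hwre]; nlinarith [Real.pi_pos]
  have hnorm : ∀ j : ℤ, ‖u * Complex.exp w ^ j‖ = ‖u‖ * Real.exp ((j:ℝ) * w.re) := by
    intro j
    rw [norm_mul, ← Complex.exp_int_mul]
    simp [Complex.norm_exp, Complex.mul_re]
  set φ : ℤ → ℝ := fun j => ‖(1 - u * Complex.exp w ^ j)‖⁻¹ with hφ
  have hexp_top : Tendsto (fun j : ℤ => Real.exp ((j:ℝ) * w.re)) atTop (𝓝 0) :=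
    Real.tendsto_exp_atBot.comp ((tendsto_intCast_atTop_atTop).atTop_mul_const_of_neg hwre0)
  have htop : ∀ᶠ j : ℤ in atTop, φ j ≤ 2 := by
    have h1 : Tendsto (fun j : ℤ => u * Complex.exp w ^ j) atTop (𝓝 0) := by
      rw [tendsto_zero_iff_norm_tendsto_zero]
      simpa only [hnorm, mul_zero] using (tendsto_const_nhds (x := ‖u‖)).mul hexp_top
    have h2 : Tendsto φ atTop (𝓝 1) := by
      have h3 : Tendsto (fun j : ℤ => 1 - u * Complex.exp w ^ j) atTop (𝓝 1) := by
        simpa using (tendsto_const_nhds (x := (1:ℂ))).sub h1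
      simpa using (h3.norm.inv₀ (by simp))
    exact h2.eventually_le_const one_lt_two
  have hbot : ∀ᶠ j : ℤ in atBot, φ j ≤ 2 := by
    rcases eq_or_ne u 0 with rfl | hu
    · filter_upwards with j; simp [hφ]
    · have hu0 : 0 < ‖u‖ := norm_pos_iff.mpr hu
      have h1 : Tendsto (fun j : ℤ => ‖u‖ * Real.exp ((j:ℝ) * w.re) - 1) atBot atTop := by
        apply tendsto_atTop_add_const_right
        exact (Real.tendsto_exp_atTop.comp
          (Tendsto.atBot_mul_const_of_neg hwre0
            (tendsto_intCast_atBot_iff.mpr tendsto_id))).const_mul_atTop hu0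
      have h2 : Tendsto (fun j : ℤ => ‖(1 - u * Complex.exp w ^ j)‖) atBot atTop := by
        apply tendsto_atTop_mono _ h1
        intro j
        calc ‖u‖ * Real.exp ((j:ℝ) * w.re) - 1 = ‖u * Complex.exp w ^ j‖ - ‖(1:ℂ)‖ := by
              rw [hnorm j]; simp
          _ ≤ ‖u * Complex.exp w ^ j - 1‖ := norm_sub_norm_le _ _
          _ = ‖(1 - u * Complex.exp w ^ j)‖ := by rw [norm_sub_rev]
      have h3 : Tendsto φ atBot (𝓝 0) := h2.inv_tendsto_atTop
      exact h3.eventually_le_const two_pos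
  have hcof : ∀ᶠ j : ℤ in cofinite, φ j ≤ 2 := by
    rw [Int.cofinite_eq, eventually_sup]; exact ⟨hbot, htop⟩
  have hfin : {j : ℤ | ¬ φ j ≤ 2}.Finite := Filter.eventually_cofinite.mp hcof
  obtain ⟨C0, hC0⟩ := (hfin.image φ).bddAbove
  refine ⟨max 2 C0, fun j => ?_⟩
  by_cases h : φ j ≤ 2
  · exact h.trans (le_max_left _ _)
  · exact (hC0 (Set.mem_image_of_mem φ h)).trans (le_max_right _ _)

lemma summable_aux {τ : ℂ} (hτ : 0 < τ.im) {M : ℝ} (hM : 0 < M) (S : ℝ) (a b u : ℂ) :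
    Summable (fun j : ℤ => Complex.exp (a*(j:ℂ) + b) *
      Complex.exp (2*(π:ℂ)*Complex.I*τ*((M:ℂ)*(j:ℂ)^2 + (S:ℂ)*(j:ℂ))) /
      (1 - u * Complex.exp (2*(π:ℂ)*Complex.I*τ) ^ j)) := by
  obtain ⟨C, hC⟩ := inv_den_bound hτ u
  have hsum : Summable (fun j : ℤ => Complex.exp (a*(j:ℂ) + b) *
      Complex.exp (2*(π:ℂ)*Complex.I*τ*((M:ℂ)*(j:ℂ)^2 + (S:ℂ)*(j:ℂ)))) := by
    have h2 : (0:ℝ) < (2*(M:ℂ)*τ).im := by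
      have : (2*(M:ℂ)*τ).im = 2*M*τ.im := by
        simp [Complex.mul_im]
      rw [this]; positivity
    have h1 : Summable (fun j : ℤ =>
        jacobiTheta₂_term j (a/(2*(π:ℂ)*Complex.I) + (S:ℂ)*τ) (2*(M:ℂ)*τ)) :=
      (summable_jacobiTheta₂_term_iff _ _).mpr h2
    refine (h1.mul_left (Complex.exp b)).congr fun j => ?_
    rw [jacobiTheta₂_term, ← Complex.exp_add, ← Complex.exp_add]
    congr 1
    have hπ : (π:ℂ) ≠ 0 := Complex.ofReal_ne_zero.mpr Real.pi_ne_zero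
    field_simp
    ring
  refine Summable.of_norm_bounded (g := fun j => C * ‖Complex.exp (a*(j:ℂ) + b) *
      Complex.exp (2*(π:ℂ)*Complex.I*τ*((M:ℂ)*(j:ℂ)^2 + (S:ℂ)*(j:ℂ)))‖)
      (hsum.norm.mul_left C) fun j => ?_
  rw [div_eq_mul_inv, norm_mul, norm_inv]
  calc ‖_‖ * ‖_‖⁻¹ ≤ ‖Complex.exp (a*(j:ℂ) + b) *
      Complex.exp (2*(π:ℂ)*Complex.I*τ*((M:ℂ)*(j:ℂ)^2 + (S:ℂ)*(j:ℂ)))‖ * C :=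
        mul_le_mul_of_nonneg_left (hC j) (norm_nonneg _)
    _ = _ := mul_comm _ _

lemma combine (A B E Q X : ℂ) (hd1 : 1 - E*Q ≠ 0) (hd2 : 1 - -E*Q ≠ 0)
    (hD : 1 - E*E*(Q*Q) ≠ 0) (hX : X ≠ 0) :
    A*B/(1 - E*E*(Q*Q)) = 1/2 * (A*B/(1-E*Q) + X⁻¹ * (A*X*B/(1 - -E*Q))) := by
  have h : X⁻¹ * (A*X*B/(1 - -E*Q)) = A*B/(1 - -E*Q) := by
    rw [← mul_div_assoc, show X⁻¹*(A*X*B) = (X⁻¹*X)*(A*B) from by ring,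
      inv_mul_cancel₀ hX, one_mul]
  rw [h, div_add_div _ _ hd1 hd2, ← mul_div_assoc,
    div_eq_div_iff hD (mul_ne_zero hd1 hd2)]
  ring

theorem stmt6 (m s : ℝ) (hm : ∃ n : ℕ, 0 < n ∧ m = (n : ℝ) / 2)
    (hs : ∃ k : ℤ, s = (k : ℝ) / 2)
    (τ z1 z2 t : ℂ) (hτ : 0 < τ.im)
    (h1 : ∀ j : ℤ, Complex.exp (2*(π:ℂ)*Complex.I*z1) * Complex.exp (2*(π:ℂ)*Complex.I*(2*τ)) ^ j ≠ 1)
    (h2 : ∀ j : ℤ, Complex.exp (-(2*(π:ℂ)*Complex.I)*z2) * Complex.exp (2*(π:ℂ)*Complex.I*(2*τ)) ^ j ≠ 1)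
    (h3 : ∀ j : ℤ, Complex.exp (2*(π:ℂ)*Complex.I*(z1/2)) * Complex.exp (2*(π:ℂ)*Complex.I*τ) ^ j ≠ 1)
    (h4 : ∀ j : ℤ, Complex.exp (-(2*(π:ℂ)*Complex.I)*(z2/2)) * Complex.exp (2*(π:ℂ)*Complex.I*τ) ^ j ≠ 1)
    (h5 : ∀ j : ℤ, Complex.exp (2*(π:ℂ)*Complex.I*((z1+1)/2)) * Complex.exp (2*(π:ℂ)*Complex.I*τ) ^ j ≠ 1)
    (h6 : ∀ j : ℤ, Complex.exp (-(2*(π:ℂ)*Complex.I)*((z2-1)/2)) * Complex.exp (2*(π:ℂ)*Complex.I*τ) ^ j ≠ 1) :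
    Phi m s (2*τ) z1 z2 t =
      (1/2) * (Phi (2*m) (2*s) τ (z1/2) (z2/2) (t/2) +
        Complex.exp (-(2*(π:ℂ)*Complex.I)*(s:ℂ)) * Phi (2*m) (2*s) τ ((z1+1)/2) ((z2-1)/2) (t/2)) := by
  obtain ⟨n, hn, hmn⟩ := hm
  have hm0 : (0:ℝ) < m := by
    have : (0:ℝ) < (n:ℝ) := by exact_mod_cast hn
    rw [hmn]; linarith
  have hm2 : (0:ℝ) < 2*m := by linarith
  -- summability of the four series on the RHS
  have sg1 : Summable (fun j : ℤ =>
      Complex.exp (2*(π:ℂ)*Complex.I*(((2*m:ℝ):ℂ)*(j:ℂ)*(z1/2+z2/2) + ((2*s:ℝ):ℂ)*(z1/2))) *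
        Complex.exp (2*(π:ℂ)*Complex.I*τ*(((2*m:ℝ):ℂ)*(j:ℂ)^2 + ((2*s:ℝ):ℂ)*(j:ℂ))) /
        (1 - Complex.exp (2*(π:ℂ)*Complex.I*(z1/2)) * Complex.exp (2*(π:ℂ)*Complex.I*τ) ^ j)) := by
    refine (summable_aux (M := 2*m) hτ hm2 (2*s)
      (2*(π:ℂ)*Complex.I*(2*(m:ℂ))*(z1/2+z2/2)) (2*(π:ℂ)*Complex.I*(2*(s:ℂ))*(z1/2))
      (Complex.exp (2*(π:ℂ)*Complex.I*(z1/2)))).congr fun j => ?_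
    have : 2*(π:ℂ)*Complex.I*(2*(m:ℂ))*(z1/2+z2/2)*(j:ℂ) + 2*(π:ℂ)*Complex.I*(2*(s:ℂ))*(z1/2)
        = 2*(π:ℂ)*Complex.I*(((2*m:ℝ):ℂ)*(j:ℂ)*(z1/2+z2/2) + ((2*s:ℝ):ℂ)*(z1/2)) := by
      push_cast; ring
    rw [this]
  have sh1 : Summable (fun j : ℤ =>
      Complex.exp (2*(π:ℂ)*Complex.I*(((2*m:ℝ):ℂ)*(j:ℂ)*((z1+1)/2+(z2-1)/2) + ((2*s:ℝ):ℂ)*((z1+1)/2))) *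
        Complex.exp (2*(π:ℂ)*Complex.I*τ*(((2*m:ℝ):ℂ)*(j:ℂ)^2 + ((2*s:ℝ):ℂ)*(j:ℂ))) /
        (1 - Complex.exp (2*(π:ℂ)*Complex.I*((z1+1)/2)) * Complex.exp (2*(π:ℂ)*Complex.I*τ) ^ j)) := by
    refine (summable_aux (M := 2*m) hτ hm2 (2*s)
      (2*(π:ℂ)*Complex.I*(2*(m:ℂ))*(z1/2+z2/2)) (2*(π:ℂ)*Complex.I*(2*(s:ℂ))*((z1+1)/2))
      (Complex.exp (2*(π:ℂ)*Complex.I*((z1+1)/2)))).congr fun j => ?_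
    have : 2*(π:ℂ)*Complex.I*(2*(m:ℂ))*(z1/2+z2/2)*(j:ℂ) + 2*(π:ℂ)*Complex.I*(2*(s:ℂ))*((z1+1)/2)
        = 2*(π:ℂ)*Complex.I*(((2*m:ℝ):ℂ)*(j:ℂ)*((z1+1)/2+(z2-1)/2) + ((2*s:ℝ):ℂ)*((z1+1)/2)) := by
      push_cast; ring
    rw [this]
  have sg2 : Summable (fun j : ℤ =>
      Complex.exp (-(2*(π:ℂ)*Complex.I)*(((2*m:ℝ):ℂ)*(j:ℂ)*(z1/2+z2/2) + ((2*s:ℝ):ℂ)*(z2/2))) *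
        Complex.exp (2*(π:ℂ)*Complex.I*τ*(((2*m:ℝ):ℂ)*(j:ℂ)^2 + ((2*s:ℝ):ℂ)*(j:ℂ))) /
        (1 - Complex.exp (-(2*(π:ℂ)*Complex.I)*(z2/2)) * Complex.exp (2*(π:ℂ)*Complex.I*τ) ^ j)) := by
    refine (summable_aux (M := 2*m) hτ hm2 (2*s)
      (-(2*(π:ℂ)*Complex.I)*(2*(m:ℂ))*(z1/2+z2/2)) (-(2*(π:ℂ)*Complex.I)*(2*(s:ℂ))*(z2/2))
      (Complex.exp (-(2*(π:ℂ)*Complex.I)*(z2/2)))).congr fun j => ?_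
    have : -(2*(π:ℂ)*Complex.I)*(2*(m:ℂ))*(z1/2+z2/2)*(j:ℂ) + -(2*(π:ℂ)*Complex.I)*(2*(s:ℂ))*(z2/2)
        = -(2*(π:ℂ)*Complex.I)*(((2*m:ℝ):ℂ)*(j:ℂ)*(z1/2+z2/2) + ((2*s:ℝ):ℂ)*(z2/2)) := by
      push_cast; ring
    rw [this]
  have sh2 : Summable (fun j : ℤ =>
      Complex.exp (-(2*(π:ℂ)*Complex.I)*(((2*m:ℝ):ℂ)*(j:ℂ)*((z1+1)/2+(z2-1)/2) + ((2*s:ℝ):ℂ)*((z2-1)/2))) *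
        Complex.exp (2*(π:ℂ)*Complex.I*τ*(((2*m:ℝ):ℂ)*(j:ℂ)^2 + ((2*s:ℝ):ℂ)*(j:ℂ))) /
        (1 - Complex.exp (-(2*(π:ℂ)*Complex.I)*((z2-1)/2)) * Complex.exp (2*(π:ℂ)*Complex.I*τ) ^ j)) := by
    refine (summable_aux (M := 2*m) hτ hm2 (2*s)
      (-(2*(π:ℂ)*Complex.I)*(2*(m:ℂ))*(z1/2+z2/2)) (-(2*(π:ℂ)*Complex.I)*(2*(s:ℂ))*((z2-1)/2))
      (Complex.exp (-(2*(π:ℂ)*Complex.I)*((z2-1)/2)))).congr fun j => ?_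
    have : -(2*(π:ℂ)*Complex.I)*(2*(m:ℂ))*(z1/2+z2/2)*(j:ℂ) + -(2*(π:ℂ)*Complex.I)*(2*(s:ℂ))*((z2-1)/2)
        = -(2*(π:ℂ)*Complex.I)*(((2*m:ℝ):ℂ)*(j:ℂ)*((z1+1)/2+(z2-1)/2) + ((2*s:ℝ):ℂ)*((z2-1)/2)) := by
      push_cast; ring
    rw [this]

  have hπI : ((π:ℂ)*Complex.I) ≠ 0 := mul_ne_zero (Complex.ofReal_ne_zero.mpr Real.pi_ne_zero) Complex.I_ne_zero
  -- pointwise identity, side 1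
  have pt1 : ∀ j : ℤ,
      Complex.exp (2*(π:ℂ)*Complex.I*((m:ℂ)*(j:ℂ)*(z1+z2) + (s:ℂ)*z1)) *
        Complex.exp (2*(π:ℂ)*Complex.I*(2*τ)*((m:ℂ)*(j:ℂ)^2 + (s:ℂ)*(j:ℂ))) /
        (1 - Complex.exp (2*(π:ℂ)*Complex.I*z1) * Complex.exp (2*(π:ℂ)*Complex.I*(2*τ)) ^ j)
      = (1/2) * (Complex.exp (2*(π:ℂ)*Complex.I*(((2*m:ℝ):ℂ)*(j:ℂ)*(z1/2+z2/2) + ((2*s:ℝ):ℂ)*(z1/2))) *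
          Complex.exp (2*(π:ℂ)*Complex.I*τ*(((2*m:ℝ):ℂ)*(j:ℂ)^2 + ((2*s:ℝ):ℂ)*(j:ℂ))) /
          (1 - Complex.exp (2*(π:ℂ)*Complex.I*(z1/2)) * Complex.exp (2*(π:ℂ)*Complex.I*τ) ^ j)
        + Complex.exp (-(2*(π:ℂ)*Complex.I)*(s:ℂ)) *
          (Complex.exp (2*(π:ℂ)*Complex.I*(((2*m:ℝ):ℂ)*(j:ℂ)*((z1+1)/2+(z2-1)/2) + ((2*s:ℝ):ℂ)*((z1+1)/2))) *
           Complex.exp (2*(π:ℂ)*Complex.I*τ*(((2*m:ℝ):ℂ)*(j:ℂ)^2 + ((2*s:ℝ):ℂ)*(j:ℂ))) /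
           (1 - Complex.exp (2*(π:ℂ)*Complex.I*((z1+1)/2)) * Complex.exp (2*(π:ℂ)*Complex.I*τ) ^ j))) := by
    intro j
    have hd1 : 1 - Complex.exp (2*(π:ℂ)*Complex.I*(z1/2)) * Complex.exp (2*(π:ℂ)*Complex.I*τ) ^ j ≠ 0 :=
      sub_ne_zero_of_ne (Ne.symm (h3 j))
    have hd2 : 1 - Complex.exp (2*(π:ℂ)*Complex.I*((z1+1)/2)) * Complex.exp (2*(π:ℂ)*Complex.I*τ) ^ j ≠ 0 :=
      sub_ne_zero_of_ne (Ne.symm (h5 j))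
    have hD : 1 - Complex.exp (2*(π:ℂ)*Complex.I*z1) * Complex.exp (2*(π:ℂ)*Complex.I*(2*τ)) ^ j ≠ 0 :=
      sub_ne_zero_of_ne (Ne.symm (h1 j))
    have e1 : Complex.exp (2*(π:ℂ)*Complex.I*((z1+1)/2)) = -Complex.exp (2*(π:ℂ)*Complex.I*(z1/2)) := by
      rw [show 2*(π:ℂ)*Complex.I*((z1+1)/2) = 2*(π:ℂ)*Complex.I*(z1/2) + (π:ℂ)*Complex.I from by ring,
        Complex.exp_add, Complex.exp_pi_mul_I]; ring
    have e2 : Complex.exp (2*(π:ℂ)*Complex.I*z1)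
        = Complex.exp (2*(π:ℂ)*Complex.I*(z1/2)) * Complex.exp (2*(π:ℂ)*Complex.I*(z1/2)) := by
      rw [← Complex.exp_add]; congr 1; ring
    have e3 : Complex.exp (2*(π:ℂ)*Complex.I*(2*τ)) ^ j
        = Complex.exp (2*(π:ℂ)*Complex.I*τ) ^ j * Complex.exp (2*(π:ℂ)*Complex.I*τ) ^ j := by
      rw [show 2*(π:ℂ)*Complex.I*(2*τ) = 2*(π:ℂ)*Complex.I*τ + 2*(π:ℂ)*Complex.I*τ from by ring,
        Complex.exp_add, mul_zpow]
    have n1 : Complex.exp (2*(π:ℂ)*Complex.I*(((2*m:ℝ):ℂ)*(j:ℂ)*(z1/2+z2/2) + ((2*s:ℝ):ℂ)*(z1/2)))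
        = Complex.exp (2*(π:ℂ)*Complex.I*((m:ℂ)*(j:ℂ)*(z1+z2) + (s:ℂ)*z1)) := by
      congr 1; push_cast; ring
    have n2 : Complex.exp (2*(π:ℂ)*Complex.I*τ*(((2*m:ℝ):ℂ)*(j:ℂ)^2 + ((2*s:ℝ):ℂ)*(j:ℂ)))
        = Complex.exp (2*(π:ℂ)*Complex.I*(2*τ)*((m:ℂ)*(j:ℂ)^2 + (s:ℂ)*(j:ℂ))) := by
      congr 1; push_cast; ring
    have n3 : Complex.exp (2*(π:ℂ)*Complex.I*(((2*m:ℝ):ℂ)*(j:ℂ)*((z1+1)/2+(z2-1)/2) + ((2*s:ℝ):ℂ)*((z1+1)/2)))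
        = Complex.exp (2*(π:ℂ)*Complex.I*((m:ℂ)*(j:ℂ)*(z1+z2) + (s:ℂ)*z1)) * Complex.exp (2*(π:ℂ)*Complex.I*(s:ℂ)) := by
      rw [← Complex.exp_add]; congr 1; push_cast; ring
    have ec : Complex.exp (-(2*(π:ℂ)*Complex.I)*(s:ℂ)) = (Complex.exp (2*(π:ℂ)*Complex.I*(s:ℂ)))⁻¹ := by
      rw [← Complex.exp_neg]; congr 1; ring
    rw [e1] at hd2
    rw [e2, e3] at hD
    rw [n1, n2, n3, e1, e2, e3, ec]
    exact combine _ _ _ _ _ hd1 hd2 hD (Complex.exp_ne_zero _)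
  -- pointwise identity, side 2
  have pt2 : ∀ j : ℤ,
      Complex.exp (-(2*(π:ℂ)*Complex.I)*((m:ℂ)*(j:ℂ)*(z1+z2) + (s:ℂ)*z2)) *
        Complex.exp (2*(π:ℂ)*Complex.I*(2*τ)*((m:ℂ)*(j:ℂ)^2 + (s:ℂ)*(j:ℂ))) /
        (1 - Complex.exp (-(2*(π:ℂ)*Complex.I)*z2) * Complex.exp (2*(π:ℂ)*Complex.I*(2*τ)) ^ j)
      = (1/2) * (Complex.exp (-(2*(π:ℂ)*Complex.I)*(((2*m:ℝ):ℂ)*(j:ℂ)*(z1/2+z2/2) + ((2*s:ℝ):ℂ)*(z2/2))) *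
          Complex.exp (2*(π:ℂ)*Complex.I*τ*(((2*m:ℝ):ℂ)*(j:ℂ)^2 + ((2*s:ℝ):ℂ)*(j:ℂ))) /
          (1 - Complex.exp (-(2*(π:ℂ)*Complex.I)*(z2/2)) * Complex.exp (2*(π:ℂ)*Complex.I*τ) ^ j)
        + Complex.exp (-(2*(π:ℂ)*Complex.I)*(s:ℂ)) *
          (Complex.exp (-(2*(π:ℂ)*Complex.I)*(((2*m:ℝ):ℂ)*(j:ℂ)*((z1+1)/2+(z2-1)/2) + ((2*s:ℝ):ℂ)*((z2-1)/2))) *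
           Complex.exp (2*(π:ℂ)*Complex.I*τ*(((2*m:ℝ):ℂ)*(j:ℂ)^2 + ((2*s:ℝ):ℂ)*(j:ℂ))) /
           (1 - Complex.exp (-(2*(π:ℂ)*Complex.I)*((z2-1)/2)) * Complex.exp (2*(π:ℂ)*Complex.I*τ) ^ j))) := by
    intro j
    have hd1 : 1 - Complex.exp (-(2*(π:ℂ)*Complex.I)*(z2/2)) * Complex.exp (2*(π:ℂ)*Complex.I*τ) ^ j ≠ 0 :=
      sub_ne_zero_of_ne (Ne.symm (h4 j))
    have hd2 : 1 - Complex.exp (-(2*(π:ℂ)*Complex.I)*((z2-1)/2)) * Complex.exp (2*(π:ℂ)*Complex.I*τ) ^ j ≠ 0 :=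
      sub_ne_zero_of_ne (Ne.symm (h6 j))
    have hD : 1 - Complex.exp (-(2*(π:ℂ)*Complex.I)*z2) * Complex.exp (2*(π:ℂ)*Complex.I*(2*τ)) ^ j ≠ 0 :=
      sub_ne_zero_of_ne (Ne.symm (h2 j))
    have e1 : Complex.exp (-(2*(π:ℂ)*Complex.I)*((z2-1)/2)) = -Complex.exp (-(2*(π:ℂ)*Complex.I)*(z2/2)) := by
      rw [show -(2*(π:ℂ)*Complex.I)*((z2-1)/2) = -(2*(π:ℂ)*Complex.I)*(z2/2) + (π:ℂ)*Complex.I from by ring,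
        Complex.exp_add, Complex.exp_pi_mul_I]; ring
    have e2 : Complex.exp (-(2*(π:ℂ)*Complex.I)*z2)
        = Complex.exp (-(2*(π:ℂ)*Complex.I)*(z2/2)) * Complex.exp (-(2*(π:ℂ)*Complex.I)*(z2/2)) := by
      rw [← Complex.exp_add]; congr 1; ring
    have e3 : Complex.exp (2*(π:ℂ)*Complex.I*(2*τ)) ^ j
        = Complex.exp (2*(π:ℂ)*Complex.I*τ) ^ j * Complex.exp (2*(π:ℂ)*Complex.I*τ) ^ j := by
      rw [show 2*(π:ℂ)*Complex.I*(2*τ) = 2*(π:ℂ)*Complex.I*τ + 2*(π:ℂ)*Complex.I*τ from by ring,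
        Complex.exp_add, mul_zpow]
    have n1 : Complex.exp (-(2*(π:ℂ)*Complex.I)*(((2*m:ℝ):ℂ)*(j:ℂ)*(z1/2+z2/2) + ((2*s:ℝ):ℂ)*(z2/2)))
        = Complex.exp (-(2*(π:ℂ)*Complex.I)*((m:ℂ)*(j:ℂ)*(z1+z2) + (s:ℂ)*z2)) := by
      congr 1; push_cast; ring
    have n2 : Complex.exp (2*(π:ℂ)*Complex.I*τ*(((2*m:ℝ):ℂ)*(j:ℂ)^2 + ((2*s:ℝ):ℂ)*(j:ℂ)))
        = Complex.exp (2*(π:ℂ)*Complex.I*(2*τ)*((m:ℂ)*(j:ℂ)^2 + (s:ℂ)*(j:ℂ))) := by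
      congr 1; push_cast; ring
    have n3 : Complex.exp (-(2*(π:ℂ)*Complex.I)*(((2*m:ℝ):ℂ)*(j:ℂ)*((z1+1)/2+(z2-1)/2) + ((2*s:ℝ):ℂ)*((z2-1)/2)))
        = Complex.exp (-(2*(π:ℂ)*Complex.I)*((m:ℂ)*(j:ℂ)*(z1+z2) + (s:ℂ)*z2)) * Complex.exp (2*(π:ℂ)*Complex.I*(s:ℂ)) := by
      rw [← Complex.exp_add]; congr 1; push_cast; ring
    have ec : Complex.exp (-(2*(π:ℂ)*Complex.I)*(s:ℂ)) = (Complex.exp (2*(π:ℂ)*Complex.I*(s:ℂ)))⁻¹ := by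
      rw [← Complex.exp_neg]; congr 1; ring
    rw [e1] at hd2
    rw [e2, e3] at hD
    rw [n1, n2, n3, e1, e2, e3, ec]
    exact combine _ _ _ _ _ hd1 hd2 hD (Complex.exp_ne_zero _)
  -- assemble
  have key1 : (∑' j : ℤ,
      Complex.exp (2*(π:ℂ)*Complex.I*((m:ℂ)*(j:ℂ)*(z1+z2) + (s:ℂ)*z1)) *
        Complex.exp (2*(π:ℂ)*Complex.I*(2*τ)*((m:ℂ)*(j:ℂ)^2 + (s:ℂ)*(j:ℂ))) /
        (1 - Complex.exp (2*(π:ℂ)*Complex.I*z1) * Complex.exp (2*(π:ℂ)*Complex.I*(2*τ)) ^ j))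
      = (1/2) * ((∑' j : ℤ,
        Complex.exp (2*(π:ℂ)*Complex.I*(((2*m:ℝ):ℂ)*(j:ℂ)*(z1/2+z2/2) + ((2*s:ℝ):ℂ)*(z1/2))) *
          Complex.exp (2*(π:ℂ)*Complex.I*τ*(((2*m:ℝ):ℂ)*(j:ℂ)^2 + ((2*s:ℝ):ℂ)*(j:ℂ))) /
          (1 - Complex.exp (2*(π:ℂ)*Complex.I*(z1/2)) * Complex.exp (2*(π:ℂ)*Complex.I*τ) ^ j))
        + Complex.exp (-(2*(π:ℂ)*Complex.I)*(s:ℂ)) * (∑' j : ℤ,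
        Complex.exp (2*(π:ℂ)*Complex.I*(((2*m:ℝ):ℂ)*(j:ℂ)*((z1+1)/2+(z2-1)/2) + ((2*s:ℝ):ℂ)*((z1+1)/2))) *
          Complex.exp (2*(π:ℂ)*Complex.I*τ*(((2*m:ℝ):ℂ)*(j:ℂ)^2 + ((2*s:ℝ):ℂ)*(j:ℂ))) /
          (1 - Complex.exp (2*(π:ℂ)*Complex.I*((z1+1)/2)) * Complex.exp (2*(π:ℂ)*Complex.I*τ) ^ j))) := by
    rw [tsum_congr pt1, tsum_mul_left, Summable.tsum_add sg1 (sh1.mul_left _), tsum_mul_left]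
  have key2 : (∑' j : ℤ,
      Complex.exp (-(2*(π:ℂ)*Complex.I)*((m:ℂ)*(j:ℂ)*(z1+z2) + (s:ℂ)*z2)) *
        Complex.exp (2*(π:ℂ)*Complex.I*(2*τ)*((m:ℂ)*(j:ℂ)^2 + (s:ℂ)*(j:ℂ))) /
        (1 - Complex.exp (-(2*(π:ℂ)*Complex.I)*z2) * Complex.exp (2*(π:ℂ)*Complex.I*(2*τ)) ^ j))
      = (1/2) * ((∑' j : ℤ,
        Complex.exp (-(2*(π:ℂ)*Complex.I)*(((2*m:ℝ):ℂ)*(j:ℂ)*(z1/2+z2/2) + ((2*s:ℝ):ℂ)*(z2/2))) *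
          Complex.exp (2*(π:ℂ)*Complex.I*τ*(((2*m:ℝ):ℂ)*(j:ℂ)^2 + ((2*s:ℝ):ℂ)*(j:ℂ))) /
          (1 - Complex.exp (-(2*(π:ℂ)*Complex.I)*(z2/2)) * Complex.exp (2*(π:ℂ)*Complex.I*τ) ^ j))
        + Complex.exp (-(2*(π:ℂ)*Complex.I)*(s:ℂ)) * (∑' j : ℤ,
        Complex.exp (-(2*(π:ℂ)*Complex.I)*(((2*m:ℝ):ℂ)*(j:ℂ)*((z1+1)/2+(z2-1)/2) + ((2*s:ℝ):ℂ)*((z2-1)/2))) *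
          Complex.exp (2*(π:ℂ)*Complex.I*τ*(((2*m:ℝ):ℂ)*(j:ℂ)^2 + ((2*s:ℝ):ℂ)*(j:ℂ))) /
          (1 - Complex.exp (-(2*(π:ℂ)*Complex.I)*((z2-1)/2)) * Complex.exp (2*(π:ℂ)*Complex.I*τ) ^ j))) := by
    rw [tsum_congr pt2, tsum_mul_left, Summable.tsum_add sg2 (sh2.mul_left _), tsum_mul_left]
  have hP : Complex.exp (-2*(π:ℂ)*Complex.I*((2*m:ℝ):ℂ)*(t/2)) = Complex.exp (-2*(π:ℂ)*Complex.I*(m:ℂ)*t) := by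
    congr 1; push_cast; ring
  simp only [Phi, Phi1, Phi2]
  rw [hP, key1, key2]
  ring

end
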